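/- Let (V, E) be a finite acyclic directed graph and d ∈ V. Then for every vertex u the set of walks from u to d is finite; letting N(u) denote its cardinality, N(d) = 1 (the trivial one-vertex walk is the only walk from d to d), and for every u ≠ d, N(u) equals the sum of N(v) over all v with E u v. This is the correctness of Coral's reverse-topological counting (Algorithm 1, Equation (1)) when all forwarding actions are ALL-type. -/

import Mathlib

/-- A walk from `u` to `w` in the directed graph with edge relation `E` is a nonempty list
of vertices starting at `u`, ending at `w`, with every consecutive pair related by `E`. -/
def IsWalk {V : Type*} (E : V → V → Prop) (u w : V) (l : List V) : Prop :=
  l ≠ [] ∧ l.head? = some u ∧ l.getLast? = some w ∧ l.Chain' E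

private lemma chain'_transGen {V : Type} {E : V → V → Prop} {l : List V}
    (h : l.Chain' E) : ∀ j (hj : j < l.length) i (_ : i < j),
    Relation.TransGen E (l.get ⟨i, by omega⟩) (l.get ⟨j, hj⟩) := by
  intro j
  induction j with
  | zero => intro _ i hi; omega
  | succ k ih =>
    intro hj i hi
    have hk : E (l.get ⟨k, by omega⟩) (l.get ⟨k + 1, hj⟩) :=
      List.isChain_iff_getElem.mp h k (by omega)
    rcases Nat.lt_or_ge i k with h' | h'
    · exact (ih (by omega) i h').tail hk
    · have : i = k := by omega
      subst this
      exact Relation.TransGen.single hk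
private lemma walk_nodup {V : Type} {E : V → V → Prop}
    (hacyc : Irreflexive (Relation.TransGen E)) {l : List V}
    (h : l.Chain' E) : l.Nodup := by
  rw [List.nodup_iff_injective_get]
  intro ⟨i, hi⟩ ⟨j, hj⟩ hij
  by_contra hne
  simp only [Fin.mk.injEq] at hne
  rcases Nat.lt_or_ge i j with h' | h'
  · exact hacyc _ (hij ▸ chain'_transGen h j hj i h')
  · have h'' : j < i := by omega
    exact hacyc _ (hij ▸ chain'_transGen h i hi j h'')


/-- Let `(V, E)` be a finite acyclic directed graph and `d ∈ V`. Then for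
every vertex `u` the set of walks from `u` to `d` is finite; letting `N u` denote its
cardinality, `N d = 1` (the trivial one-vertex walk is the only walk from `d` to `d`), and
for every `u ≠ d`, `N u` equals the sum of `N v` over all `v` with `E u v`. -/
theorem walk_count_recursion {V : Type} [Fintype V] [DecidableEq V]
    (E : V → V → Prop) [DecidableRel E]
    (hacyc : Irreflexive (Relation.TransGen E)) (d : V) :
    (∀ u : V, {l : List V | IsWalk E u d l}.Finite) ∧
    {l : List V | IsWalk E d d l}.ncard = 1 ∧
    (∀ u : V, u ≠ d →
      {l : List V | IsWalk E u d l}.ncard =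
        ∑ v ∈ Finset.univ.filter (fun v => E u v),
          {l : List V | IsWalk E v d l}.ncard) := by
  have hfin : ∀ u : V, {l : List V | IsWalk E u d l}.Finite := by
    intro u
    apply (List.finite_length_le V (Fintype.card V)).subset
    intro l hl
    exact (walk_nodup hacyc hl.2.2.2).length_le_card
  refine ⟨hfin, ?_, ?_⟩
  · have : {l : List V | IsWalk E d d l} = {[d]} := by
      ext l
      simp only [Set.mem_setOf_eq, Set.mem_singleton_iff]
      constructor
      · rintro ⟨hne, hh, hl, hc⟩
        match l with
        | [a] =>
          simp only [List.head?] at hh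
          simp only [Option.some.injEq] at hh
          rw [hh]
        | a :: b :: t =>
          simp only [List.head?, Option.some.injEq] at hh
          rw [hh] at hc
          rw [List.getLast?_cons_cons] at hl
          have hmem : d ∈ b :: t := List.mem_of_mem_getLast? (by rw [hl]; rfl)
          have hnd := walk_nodup hacyc hc
          rw [List.nodup_cons] at hnd
          exact absurd hmem hnd.1
      · rintro rfl
        exact ⟨by simp, rfl, rfl, List.isChain_singleton d⟩
    rw [this, Set.ncard_singleton]
  · intro u hu
    classical
    set F : V → Finset (List V) := fun v => (hfin v).toFinset with hF
    have hmemF : ∀ v l, l ∈ F v ↔ IsWalk E v d l := by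
      intro v l; simp [hF, Set.Finite.mem_toFinset, Set.mem_setOf_eq]
    have hkey : F u = (Finset.univ.filter (fun v => E u v)).biUnion
        (fun v => (F v).image (List.cons u)) := by
      ext l
      simp only [Finset.mem_biUnion, Finset.mem_filter, Finset.mem_univ, true_and,
        Finset.mem_image, hmemF]
      constructor
      · rintro ⟨hne, hh, hl, hc⟩
        match l with
        | [a] =>
          simp only [List.head?, Option.some.injEq] at hh
          subst hh
          simp only [List.getLast?_singleton, Option.some.injEq] at hl
          exact absurd hl hu
        | a :: b :: t =>
          simp only [List.head?, Option.some.injEq] at hh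
          subst hh
          simp only [List.Chain', List.isChain_cons_cons] at hc
          refine ⟨b, hc.1, b :: t, ⟨by simp, rfl, ?_, hc.2⟩, rfl⟩
          rw [List.getLast?_cons_cons] at hl
          exact hl
      · rintro ⟨v, huv, t, ⟨htne, hth, htl, htc⟩, rfl⟩
        match t with
        | b :: t' =>
          simp only [List.head?, Option.some.injEq] at hth
          subst hth
          refine ⟨by simp, rfl, ?_, ?_⟩
          · rw [List.getLast?_cons_cons]; exact htl
          · simp only [List.Chain', List.isChain_cons_cons]; exact ⟨huv, htc⟩
    have hdisj : ∀ x ∈ Finset.univ.filter (fun v => E u v),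
        ∀ y ∈ Finset.univ.filter (fun v => E u v), x ≠ y →
        Disjoint ((F x).image (List.cons u)) ((F y).image (List.cons u)) := by
      intro x _ y _ hxy
      rw [Finset.disjoint_left]
      rintro l hlx hly
      simp only [Finset.mem_image, hmemF] at hlx hly
      obtain ⟨t₁, ht₁, rfl⟩ := hlx
      obtain ⟨t₂, ht₂, heq⟩ := hly
      have : t₂ = t₁ := by injection heq
      subst this
      have h1 := ht₁.2.1
      have h2 := ht₂.2.1
      rw [h1] at h2
      exact hxy (Option.some.inj h2)
    have hncard : ∀ v, {l : List V | IsWalk E v d l}.ncard = (F v).card := by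
      intro v
      rw [Set.ncard_eq_toFinset_card _ (hfin v)]
    rw [hncard u, hkey, Finset.card_biUnion hdisj]
    apply Finset.sum_congr rfl
    intro v _
    rw [Finset.card_image_of_injective _ (fun a b h => by injection h), hncard v]
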